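/- Let J be an even positive integer, let σ > 0, and let 0 < δ ≤ min(1/2, σ). Set r := δ/(σ√2) and p := 1 + e^{π−2π²}·(π^{1/4}/Γ(3/4) − 1), where Γ is the Gamma function. Then √(δ/p) · Σ_{j=−J/2}^{J/2−1} exp(−j²r²) ≥ ∫_{−Jδ/2}^{Jδ/2} exp(−x²/(2σ²)) dx. -/

import Mathlib

-- numeric core: S ≥ a(S+1-E)
lemma core_cases (m : ℕ) (hm : 1 ≤ m) (c : ℝ) (hc0 : 0 < c) (hc2 : c ≤ 1/2)
    (a : ℝ) (ha0 : 0 < a) (haa : a ≤ 0.7072) :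
    a * ((∑ j ∈ Finset.Icc (-(m:ℤ)) ((m:ℤ)-1), Real.exp (-(j:ℝ)^2 * c)) + 1
        - Real.exp (-(m:ℝ)^2 * c))
      ≤ ∑ j ∈ Finset.Icc (-(m:ℤ)) ((m:ℤ)-1), Real.exp (-(j:ℝ)^2 * c) := by
  set u : ℝ := Real.exp (-c) with hudef
  have hu0 : 0 < u := Real.exp_pos _
  have hu1 : u ≤ 1 := Real.exp_le_one_iff.mpr (by linarith)
  have huhalf : Real.exp (-(1:ℝ)/2) ≤ u := Real.exp_le_exp.2 (by linarith)
  have hexp1 : 1/2.7182818286 ≤ Real.exp (-1 : ℝ) := by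
    rw [Real.exp_neg, ← one_div]
    exact one_div_le_one_div_of_le (Real.exp_pos 1) Real.exp_one_lt_d9.le
  have hsq : Real.exp (-(1:ℝ)/2)^2 = Real.exp (-1 : ℝ) := by
    rw [← Real.exp_nat_mul]
    norm_num
  have hu2 : 0.36787 ≤ u^2 := by
    have h1 : Real.exp (-(1:ℝ)/2)^2 ≤ u^2 := by
      apply pow_le_pow_left₀ (Real.exp_pos _).le huhalf
    rw [hsq] at h1
    nlinarith [hexp1]
  have hue : 0.6065 ≤ u := by nlinarith [hu2, hu0]
  have hu4 : 0.1353 ≤ u^4 := by nlinarith [hu2]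
  have h4 : Real.exp (-(-2:ℝ)^2*c) = u^4 := by
    rw [show (-(-2:ℝ)^2*c) = ((4:ℕ):ℝ)*(-c) by push_cast; ring, Real.exp_nat_mul]
  have h4' : Real.exp (-(2:ℝ)^2*c) = u^4 := by
    rw [show (-(2:ℝ)^2*c) = ((4:ℕ):ℝ)*(-c) by push_cast; ring, Real.exp_nat_mul]
  have h1' : Real.exp (-(-1:ℝ)^2*c) = u := by norm_num [hudef]
  have h0' : Real.exp (-(0:ℝ)^2*c) = 1 := by norm_num
  obtain h3 | h3 := lt_or_ge m 3
  · interval_cases m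
    · -- m = 1
      have hset : Finset.Icc (-(1:ℤ)) (0:ℤ) = {-1, 0} := by decide
      push_cast
      rw [hset]
      rw [Finset.sum_insert (by decide), Finset.sum_singleton]
      push_cast
      rw [h1', h0']
      norm_num
      nlinarith [hue, haa]
    · -- m = 2
      have hset : Finset.Icc (-(2:ℤ)) (1:ℤ) = {-2, -1, 0, 1} := by decide
      push_cast
      rw [hset]
      rw [Finset.sum_insert (by decide), Finset.sum_insert (by decide),
        Finset.sum_insert (by decide), Finset.sum_singleton]
      push_cast
      rw [h4, h1', h0', show Real.exp (-(1:ℝ)^2*c) = u by norm_num [hudef],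
        show Real.exp (-(2:ℝ)^2*c) = u^4 from h4']
      nlinarith [hue, haa, hu4, hu0,
        mul_nonneg (by linarith : (0:ℝ) ≤ 0.7072 - a) (by linarith : (0:ℝ) ≤ 1 + u)]
  · -- m ≥ 3
    have hsub : Finset.Icc (-2:ℤ) 2 ⊆ Finset.Icc (-(m:ℤ)) ((m:ℤ)-1) :=
      Finset.Icc_subset_Icc (by omega) (by omega)
    have hS : (∑ j ∈ Finset.Icc (-2:ℤ) 2, Real.exp (-(j:ℝ)^2 * c))
        ≤ ∑ j ∈ Finset.Icc (-(m:ℤ)) ((m:ℤ)-1), Real.exp (-(j:ℝ)^2 * c) :=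
      Finset.sum_le_sum_of_subset_of_nonneg hsub (fun i _ _ => (Real.exp_pos _).le)
    have hval : (∑ j ∈ Finset.Icc (-2:ℤ) 2, Real.exp (-(j:ℝ)^2 * c))
        = u^4 + u + 1 + u + u^4 := by
      rw [show Finset.Icc (-2:ℤ) 2 = {-2,-1,0,1,2} by decide]
      rw [Finset.sum_insert (by decide), Finset.sum_insert (by decide),
        Finset.sum_insert (by decide), Finset.sum_insert (by decide),
        Finset.sum_singleton]
      push_cast
      rw [h4, h1', h0', show Real.exp (-(1:ℝ)^2*c) = u by norm_num [hudef], h4']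
      ring
    rw [hval] at hS
    set s := ∑ j ∈ Finset.Icc (-(m:ℤ)) ((m:ℤ)-1), Real.exp (-(j:ℝ)^2 * c) with hs
    set E := Real.exp (-(m:ℝ)^2 * c) with hEdef
    have hE0 : 0 < E := Real.exp_pos _
    clear_value s E
    clear hs hEdef hval hsub h4 h4' h1' h0' hsq hexp1 huhalf hudef
    have hS' : (2.4836:ℝ) ≤ s := by linarith
    have h1 : a * (s + 1 - E) ≤ a * (s + 1) := by nlinarith [mul_pos ha0 hE0]
    have h2 : a * (s + 1) ≤ s := by
      nlinarith [mul_nonneg (by linarith : (0:ℝ) ≤ s - 2.4836) (by linarith : (0:ℝ) ≤ 1 - a)]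
    linarith

lemma gauss_reflect (σ a : ℝ) :
    ∫ x in (-a)..a, Real.exp (-x^2 / (2*σ^2))
      = 2 * ∫ x in (0:ℝ)..a, Real.exp (-x^2 / (2*σ^2)) := by
  have hcont : Continuous (fun x : ℝ => Real.exp (-x^2 / (2*σ^2))) := by fun_prop
  have hInt : ∀ u v : ℝ, IntervalIntegrable (fun x : ℝ => Real.exp (-x^2 / (2*σ^2)))
      MeasureTheory.volume u v := fun u v => hcont.intervalIntegrable u v
  have h1 : ∫ x in (-a)..(0:ℝ), Real.exp (-x^2 / (2*σ^2))
      = ∫ x in (0:ℝ)..a, Real.exp (-x^2 / (2*σ^2)) := by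
    have := intervalIntegral.integral_comp_neg (a := 0) (b := a)
      (fun x : ℝ => Real.exp (-x^2 / (2*σ^2)))
    simp only [neg_neg, neg_sq, neg_zero] at this
    rw [← this]
  rw [← intervalIntegral.integral_add_adjacent_intervals (b := 0) (hInt _ _) (hInt _ _), h1]
  ring

-- sum reindex: range m over ℕ = Icc 0 (m-1) over ℤ
lemma sum_range_eq_Icc (m : ℕ) (c : ℝ) :
    ∑ k ∈ Finset.range m, Real.exp (-(k:ℝ)^2 * c)
      = ∑ j ∈ Finset.Icc (0:ℤ) ((m:ℤ)-1), Real.exp (-(j:ℝ)^2 * c) := by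
  refine Finset.sum_nbij' (fun k => (k:ℤ)) (fun j => j.toNat) ?_ ?_ ?_ ?_ ?_
  · intro k hk; simp at hk ⊢; omega
  · intro j hj; simp at hj ⊢; omega
  · intro k hk; simp
  · intro j hj; simp at hj ⊢; omega
  · intro k hk; norm_num

-- the key identity: S = 2T - 1 + E
lemma sum_sym_identity (m : ℕ) (hm : 1 ≤ m) (c : ℝ) :
    ∑ j ∈ Finset.Icc (-(m:ℤ)) ((m:ℤ)-1), Real.exp (-(j:ℝ)^2 * c)
      = 2 * (∑ j ∈ Finset.Icc (0:ℤ) ((m:ℤ)-1), Real.exp (-(j:ℝ)^2 * c))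
        - 1 + Real.exp (-(m:ℝ)^2 * c) := by
  have hm' : (1:ℤ) ≤ (m:ℤ) := by exact_mod_cast hm
  have hsplit : Finset.Icc (-(m:ℤ)) ((m:ℤ)-1)
      = Finset.Icc (-(m:ℤ)) (-1) ∪ Finset.Icc (0:ℤ) ((m:ℤ)-1) := by
    ext j; simp; omega
  have hdisj : Disjoint (Finset.Icc (-(m:ℤ)) (-1)) (Finset.Icc (0:ℤ) ((m:ℤ)-1)) := by
    rw [Finset.disjoint_left]; intro j hj hj'; simp at hj hj'; omega
  rw [hsplit, Finset.sum_union hdisj]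
  have hneg : ∑ j ∈ Finset.Icc (-(m:ℤ)) (-1), Real.exp (-(j:ℝ)^2 * c)
      = ∑ j ∈ Finset.Icc (1:ℤ) (m:ℤ), Real.exp (-(j:ℝ)^2 * c) := by
    refine Finset.sum_nbij' (fun j => -j) (fun j => -j) ?_ ?_ ?_ ?_ ?_
    · intro j hj; simp at hj ⊢; omega
    · intro j hj; simp at hj ⊢; omega
    · intro j _; ring
    · intro j _; ring
    · intro j hj; push_cast; ring_nf
  have hshift : ∑ j ∈ Finset.Icc (1:ℤ) (m:ℤ), Real.exp (-(j:ℝ)^2 * c)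
      = ∑ j ∈ Finset.Icc (0:ℤ) ((m:ℤ)-1), Real.exp (-(j:ℝ)^2 * c)
        - 1 + Real.exp (-(m:ℝ)^2 * c) := by
    have h1 : Finset.Icc (0:ℤ) (m:ℤ) = insert 0 (Finset.Icc (1:ℤ) (m:ℤ)) := by
      ext j; simp; omega
    have h2 : Finset.Icc (0:ℤ) (m:ℤ) = insert (m:ℤ) (Finset.Icc (0:ℤ) ((m:ℤ)-1)) := by
      ext j; simp; omega
    have e1 : ∑ j ∈ Finset.Icc (0:ℤ) (m:ℤ), Real.exp (-(j:ℝ)^2 * c)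
        = 1 + ∑ j ∈ Finset.Icc (1:ℤ) (m:ℤ), Real.exp (-(j:ℝ)^2 * c) := by
      rw [h1, Finset.sum_insert (by simp)]
      norm_num
    have e2 : ∑ j ∈ Finset.Icc (0:ℤ) (m:ℤ), Real.exp (-(j:ℝ)^2 * c)
        = Real.exp (-(m:ℝ)^2 * c) + ∑ j ∈ Finset.Icc (0:ℤ) ((m:ℤ)-1), Real.exp (-(j:ℝ)^2 * c) := by
      rw [h2, Finset.sum_insert (by simp)]
      push_cast
      ring
    rw [e2] at e1
    linarith
  rw [hneg, hshift]
  ring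

lemma Gamma54_le_one : Real.Gamma (5/4) ≤ 1 := by
  have h := Real.convexOn_Gamma.2 (by norm_num : (1:ℝ) ∈ Set.Ioi 0)
    (by norm_num : (2:ℝ) ∈ Set.Ioi 0) (by norm_num : (0:ℝ) ≤ 3/4)
    (by norm_num : (0:ℝ) ≤ 1/4) (by norm_num)
  rw [Real.Gamma_one, Real.Gamma_two] at h
  norm_num at h
  exact h

lemma Gamma34_ge_one : 1 ≤ Real.Gamma (3/4) := by
  have hrefl := Real.Gamma_mul_Gamma_one_sub (1/4)
  rw [show (1:ℝ) - 1/4 = 3/4 by norm_num,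
      show Real.pi * (1/4) = Real.pi/4 by ring, Real.sin_pi_div_four] at hrefl
  have hG14 : Real.Gamma (1/4) = 4 * Real.Gamma (5/4) := by
    have := Real.Gamma_add_one (by norm_num : (1/4 : ℝ) ≠ 0)
    rw [show (1/4 : ℝ) + 1 = 5/4 by norm_num] at this
    rw [this]; ring
  have h54 : Real.Gamma (5/4) ≤ 1 := Gamma54_le_one
  have h54pos : 0 < Real.Gamma (5/4) := Real.Gamma_pos_of_pos (by norm_num)
  have h14pos : 0 < Real.Gamma (1/4) := Real.Gamma_pos_of_pos (by norm_num)
  have h14le : Real.Gamma (1/4) ≤ 4 := by rw [hG14]; linarith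
  have hs2 : Real.sqrt 2 ≤ 1.5 := by
    rw [show (1.5:ℝ) = Real.sqrt (1.5^2) by rw [Real.sqrt_sq]; norm_num]
    apply Real.sqrt_le_sqrt; norm_num
  have hπ : 3 ≤ Real.pi := Real.pi_gt_three.le
  -- Γ(3/4) = π / (√2/2 * Γ(1/4)) ≥ π*2/(√2*4)
  have hG34 : Real.Gamma (3/4) = Real.pi / (Real.sqrt 2 / 2) / Real.Gamma (1/4) := by
    field_simp at hrefl ⊢
    nlinarith [hrefl]
  rw [hG34, le_div_iff₀ h14pos, le_div_iff₀ (by positivity : (0:ℝ) < Real.sqrt 2 / 2)]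
  nlinarith [hs2, hπ, h14le, h14pos, Real.sqrt_nonneg 2]

lemma pert_bound :
    |Real.exp (Real.pi - 2 * Real.pi^2) * (Real.pi ^ ((1:ℝ)/4) / Real.Gamma (3/4) - 1)| ≤ 0.0002 := by
  have hG : 1 ≤ Real.Gamma (3/4) := Gamma34_ge_one
  have hGpos : 0 < Real.Gamma (3/4) := by linarith
  have hπ4 : Real.pi ^ ((1:ℝ)/4) ≤ 2 := by
    have h1 : Real.pi ^ ((1:ℝ)/4) ≤ (16:ℝ) ^ ((1:ℝ)/4) :=
      Real.rpow_le_rpow Real.pi_pos.le (by nlinarith [Real.pi_lt_d2]) (by norm_num)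
    have h2 : (16:ℝ) ^ ((1:ℝ)/4) = 2 := by
      rw [show (16:ℝ) = 2^(4:ℕ) by norm_num, ← Real.rpow_natCast 2 4,
        ← Real.rpow_mul (by norm_num)]
      norm_num
    linarith
  have hπ4pos : 0 ≤ Real.pi ^ ((1:ℝ)/4) := Real.rpow_nonneg Real.pi_pos.le _
  have hratio : Real.pi ^ ((1:ℝ)/4) / Real.Gamma (3/4) ≤ 2 := by
    calc Real.pi ^ ((1:ℝ)/4) / Real.Gamma (3/4) ≤ Real.pi ^ ((1:ℝ)/4) :=
          div_le_self hπ4pos hG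
      _ ≤ 2 := hπ4
  have hratio0 : 0 ≤ Real.pi ^ ((1:ℝ)/4) / Real.Gamma (3/4) := by positivity
  have hexp : Real.exp (Real.pi - 2 * Real.pi^2) ≤ 0.0002 := by
    have h1 : Real.pi - 2 * Real.pi^2 ≤ -16 := by
      nlinarith [Real.pi_gt_d6, Real.pi_lt_d2]
    have h2 : Real.exp (Real.pi - 2*Real.pi^2) ≤ Real.exp (-16) := Real.exp_le_exp.2 h1
    have h3 : Real.exp (-16) = 1 / Real.exp 16 := by rw [Real.exp_neg]; ring
    have h4 : (6561:ℝ) ≤ Real.exp 16 := by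
      have := Real.add_one_le_exp (2:ℝ)
      have h5 : Real.exp 16 = Real.exp 2 ^ (8:ℕ) := by
        rw [← Real.exp_nat_mul]; norm_num
      rw [h5]
      calc (6561:ℝ) = 3^(8:ℕ) := by norm_num
        _ ≤ Real.exp 2 ^ (8:ℕ) := by apply pow_le_pow_left₀ (by norm_num); linarith
    have h6 : 1 / Real.exp 16 ≤ 1/6561 :=
      one_div_le_one_div_of_le (by norm_num) h4
    rw [h3] at h2
    calc Real.exp (Real.pi - 2*Real.pi^2) ≤ 1/Real.exp 16 := h2
      _ ≤ 1/6561 := h6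
      _ ≤ 0.0002 := by norm_num
  have hexp0 : 0 < Real.exp (Real.pi - 2 * Real.pi^2) := Real.exp_pos _
  rw [abs_le]
  constructor
  · nlinarith
  · nlinarith

lemma gauss_cont (σ : ℝ) : Continuous (fun x : ℝ => Real.exp (-x^2 / (2*σ^2))) := by
  fun_prop

lemma gauss_int_upper (σ δ : ℝ) (hσ : 0 < σ) (hδ : 0 ≤ δ) (m : ℕ) :
    ∫ x in (0:ℝ)..((m:ℝ)*δ), Real.exp (-x^2 / (2*σ^2))
      ≤ δ * ∑ k ∈ Finset.range m, Real.exp (-(k:ℝ)^2 * (δ^2/(2*σ^2))) := by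
  have hcont := gauss_cont σ
  have hInt : ∀ a b : ℝ, IntervalIntegrable (fun x : ℝ => Real.exp (-x^2 / (2*σ^2)))
      MeasureTheory.volume a b := fun a b => hcont.intervalIntegrable a b
  have key : ∑ k ∈ Finset.range m, ∫ x in ((k:ℝ)*δ)..(((k:ℕ)+1:ℕ):ℝ)*δ,
      Real.exp (-x^2 / (2*σ^2)) = ∫ x in ((0:ℕ):ℝ)*δ..((m:ℝ)*δ), Real.exp (-x^2 / (2*σ^2)) := by
    exact intervalIntegral.sum_integral_adjacent_intervals (a := fun k : ℕ => (k:ℝ)*δ)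
      (fun k _ => hInt _ _)
  rw [show ((0:ℝ)) = ((0:ℕ):ℝ)*δ by norm_num, ← key, Finset.mul_sum]
  apply Finset.sum_le_sum
  intro k _
  have hle : ((k:ℕ):ℝ)*δ ≤ ((k+1:ℕ):ℝ)*δ := by
    push_cast; nlinarith
  calc ∫ x in ((k:ℝ)*δ)..(((k+1:ℕ)):ℝ)*δ, Real.exp (-x^2 / (2*σ^2))
      ≤ ∫ x in ((k:ℝ)*δ)..(((k+1:ℕ)):ℝ)*δ, Real.exp (-((k:ℝ)*δ)^2 / (2*σ^2)) := by
        apply intervalIntegral.integral_mono_on hle (hInt _ _)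
          (intervalIntegrable_const)
        intro x hx
        apply Real.exp_le_exp.mpr
        have h0 : 0 ≤ (k:ℝ)*δ := by positivity
        have hx1 : (k:ℝ)*δ ≤ x := hx.1
        have : ((k:ℝ)*δ)^2 ≤ x^2 := by nlinarith
        have h2 : 0 < 2*σ^2 := by positivity
        exact div_le_div_of_nonneg_right (neg_le_neg this) h2.le
    _ = δ * Real.exp (-(k:ℝ)^2 * (δ^2/(2*σ^2))) := by
        rw [intervalIntegral.integral_const, smul_eq_mul]
        push_cast
        rw [show ((k:ℝ)+1)*δ - (k:ℝ)*δ = δ by ring]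
        congr 1
        field_simp



/-- √(δ/p) times the discrete Gaussian sum dominates the Gaussian integral,
where p := 1 + e^{π−2π²}·(π^{1/4}/Γ(3/4) − 1). -/
theorem scaled_gaussian_sum_ge_integral
    (J : ℕ) (hJ : 0 < J) (hJe : Even J) (σ δ : ℝ)
    (hσ : 0 < σ) (hδ0 : 0 < δ) (hδ : δ ≤ min (1/2) σ) :
    Real.sqrt (δ / (1 + Real.exp (Real.pi - 2 * Real.pi^2) *
        (Real.pi ^ ((1:ℝ)/4) / Real.Gamma (3/4) - 1))) *
      (∑ j ∈ Finset.Icc (-(J:ℤ)/2) ((J:ℤ)/2 - 1),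
        Real.exp (-(j:ℝ)^2 * (δ / (σ * Real.sqrt 2))^2))
    ≥ ∫ x in (-(J:ℝ) * δ / 2)..((J:ℝ) * δ / 2), Real.exp (-x^2 / (2 * σ^2)) := by
  obtain ⟨m, hJm⟩ := hJe
  subst hJm
  have hm : 1 ≤ m := by omega
  have hδσ : δ ≤ σ := le_trans hδ (min_le_right _ _)
  have hδh : δ ≤ 1/2 := le_trans hδ (min_le_left _ _)
  -- rewrite bounds
  rw [show (-((m+m:ℕ):ℤ))/2 = -(m:ℤ) by push_cast; omega,
      show ((m+m:ℕ):ℤ)/2 - 1 = (m:ℤ) - 1 by push_cast; omega,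
      show (-((m+m:ℕ):ℝ)) * δ / 2 = -((m:ℝ)*δ) by push_cast; ring,
      show ((m+m:ℕ):ℝ) * δ / 2 = (m:ℝ)*δ by push_cast; ring,
      show (δ / (σ * Real.sqrt 2))^2 = δ^2/(2*σ^2) by
        rw [div_pow, mul_pow, Real.sq_sqrt (by norm_num : (0:ℝ) ≤ 2)]; ring]
  set c : ℝ := δ^2/(2*σ^2) with hcdef
  have hc0 : 0 < c := by positivity
  have hc2 : c ≤ 1/2 := by
    rw [hcdef, div_le_iff₀ (by positivity)]; nlinarith
  set S := ∑ j ∈ Finset.Icc (-(m:ℤ)) ((m:ℤ)-1), Real.exp (-(j:ℝ)^2 * c) with hSdef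
  set T := ∑ j ∈ Finset.Icc (0:ℤ) ((m:ℤ)-1), Real.exp (-(j:ℝ)^2 * c) with hTdef
  set E := Real.exp (-(m:ℝ)^2 * c) with hEdef
  have hid : S = 2*T - 1 + E := sum_sym_identity m hm c
  -- integral bound
  have hIb : (∫ x in (-((m:ℝ)*δ))..((m:ℝ)*δ), Real.exp (-x^2/(2*σ^2))) ≤ δ*(2*T) := by
    rw [gauss_reflect σ ((m:ℝ)*δ)]
    have h := gauss_int_upper σ δ hσ hδ0.le m
    rw [sum_range_eq_Icc m (δ^2/(2*σ^2))] at h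
    rw [← hcdef] at h
    rw [← hTdef] at h
    linarith
  -- the constant p
  set q := Real.exp (Real.pi - 2 * Real.pi^2) * (Real.pi ^ ((1:ℝ)/4) / Real.Gamma (3/4) - 1)
    with hqdef
  have hqb : |q| ≤ 0.0002 := pert_bound
  rw [abs_le] at hqb
  set p : ℝ := 1 + q with hpdef
  have hp1 : 0.999 ≤ p := by rw [hpdef]; linarith [hqb.1]
  have hp2 : p ≤ 1.001 := by rw [hpdef]; linarith [hqb.2]
  have hp0 : 0 < p := by linarith
  set a := Real.sqrt (p*δ) with hadef
  have ha2 : a^2 = p*δ := Real.sq_sqrt (by positivity)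
  have ha0 : 0 < a := Real.sqrt_pos.mpr (by positivity)
  have haa : a ≤ 0.7072 := by
    have hpd : p*δ ≤ 0.5001 := by nlinarith
    calc a ≤ Real.sqrt 0.5001 := Real.sqrt_le_sqrt hpd
      _ ≤ 0.7072 := by
          rw [show (0.7072:ℝ) = Real.sqrt (0.7072^2) by rw [Real.sqrt_sq (by norm_num)]]
          apply Real.sqrt_le_sqrt; norm_num
  have hsqrt : Real.sqrt (δ/p) = a/p := by
    rw [hadef, show δ/p = (p*δ)/p^2 by field_simp,
      Real.sqrt_div' _ (by positivity : (0:ℝ) ≤ p^2), Real.sqrt_sq hp0.le]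
  -- core inequality
  have hcore : a * (S + 1 - E) ≤ S := core_cases m hm c hc0 hc2 a ha0 haa
  rw [ge_iff_le, hsqrt]
  calc (∫ x in (-((m:ℝ)*δ))..((m:ℝ)*δ), Real.exp (-x^2/(2*σ^2)))
      ≤ δ*(2*T) := hIb
    _ = (a^2/p) * (S + 1 - E) := by
        rw [ha2]
        rw [show p*δ/p = δ by field_simp]
        rw [hid]; ring
    _ = (a/p) * (a * (S + 1 - E)) := by ring
    _ ≤ (a/p) * S := by
        apply mul_le_mul_of_nonneg_left hcore (by positivity)
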